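/- Let (X, μ) be a standard probability space, n ≥ 1, and let πₙ : Xⁿ → X^⊙n be the quotient by the permutation action of the symmetric group Sₙ, with pushforward measure μ^⊙n. For a measure-preserving bijection T of (X, μ), let ι^⊙n(T) be the induced measure-preserving bijection of X^⊙n given by [x₁,…,xₙ] ↦ [T x₁, …, T xₙ]. Then μ^⊙n(Fix(ι^⊙n(T))) = μ(Fix(T))ⁿ. -/

import Mathlib

open MeasureTheory Set

/-- The set where two measurable maps into a standard Borel space agree is
measurable. -/
lemma measurableSet_eq_fun_sb {α X : Type*} [MeasurableSpace α] [MeasurableSpace X]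
    [StandardBorelSpace X] {f g : α → X} (hf : Measurable f) (hg : Measurable g) :
    MeasurableSet {x | f x = g x} := by
  letI := upgradeStandardBorel X
  have : {x | f x = g x} = (fun x => (f x, g x)) ⁻¹' (Set.diagonal X) := rfl
  rw [this]
  exact (hf.prodMk hg) isClosed_diagonal.measurableSet

/-- For `i ≠ j`, the set of tuples with `f j = T (f i)` is null. -/
lemma null_graph {X : Type*} [MeasurableSpace X] [StandardBorelSpace X]
    (μ : Measure X) [IsProbabilityMeasure μ] [NullSingletonClass μ]
    {n : ℕ} (T : X ≃ᵐ X) {i j : Fin n} (hij : ¬ i = j) :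
    Measure.pi (fun _ : Fin n => μ) {f : Fin n → X | f j = T (f i)} = 0 := by
  classical
  set e := MeasurableEquiv.piEquivPiSubtypeProd (fun _ : Fin n => X) (fun k => k = j) with he
  have hmp := measurePreserving_piEquivPiSubtypeProd (fun _ : Fin n => μ) (fun k => k = j)
  set D : Set ((∀ _ : {k : Fin n // k = j}, X) × (∀ _ : {k : Fin n // ¬ k = j}, X)) :=
    {q | q.1 ⟨j, rfl⟩ = T (q.2 ⟨i, hij⟩)} with hD
  have hDm : MeasurableSet D := by
    apply measurableSet_eq_fun_sb
    · exact (measurable_pi_apply _).comp measurable_fst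
    · exact T.measurable.comp ((measurable_pi_apply _).comp measurable_snd)
  have hpre : {f : Fin n → X | f j = T (f i)} = e ⁻¹' D := by
    ext f
    simp [hD, he, MeasurableEquiv.piEquivPiSubtypeProd, Equiv.piEquivPiSubtypeProd]
  rw [hpre, hmp.measure_preimage hDm.nullMeasurableSet]
  rw [Measure.prod_apply hDm]
  have : ∀ a : ∀ _ : {k : Fin n // k = j}, X,
      (Measure.pi fun _ : {k : Fin n // ¬ k = j} => μ) (Prod.mk a ⁻¹' D) = 0 := by
    intro a
    have : Prod.mk a ⁻¹' D = {b : ∀ _ : {k : Fin n // ¬ k = j}, X |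
        b ⟨i, hij⟩ = T.symm (a ⟨j, rfl⟩)} := by
      ext b
      simp only [hD, mem_preimage, mem_setOf_eq]
      constructor
      · intro h; rw [h]; simp
      · intro h; rw [h]; simp
    rw [this]
    exact Measure.pi_hyperplane _ _ _
  simp only [this, lintegral_zero]

theorem stmt9 {X : Type*} [MeasurableSpace X] [StandardBorelSpace X]
    (μ : Measure X) [IsProbabilityMeasure μ] [NullSingletonClass μ]
    (n : ℕ) (hn : 1 ≤ n) (T : X ≃ᵐ X) (hT : MeasurePreserving T μ μ) :
    Measure.pi (fun _ : Fin n => μ)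
        {f : Fin n → X | ∃ σ : Equiv.Perm (Fin n), ∀ i, T (f i) = f (σ i)}
      = μ {x | T x = x} ^ n := by
  classical
  set ν := Measure.pi (fun _ : Fin n => μ) with hν
  set A : Equiv.Perm (Fin n) → Set (Fin n → X) :=
    fun σ => {f | ∀ i, T (f i) = f (σ i)} with hA
  have hS : {f : Fin n → X | ∃ σ : Equiv.Perm (Fin n), ∀ i, T (f i) = f (σ i)}
      = ⋃ σ, A σ := by
    ext f; simp [hA]
  have hF : MeasurableSet {x | T x = x} :=
    measurableSet_eq_fun_sb T.measurable measurable_id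
  -- the identity piece
  have hA1 : A 1 = Set.pi univ (fun _ : Fin n => {x | T x = x}) := by
    ext f; simp [hA]
  have hA1m : ν (A 1) = μ {x | T x = x} ^ n := by
    rw [hA1, hν, Measure.pi_pi]
    simp
  -- non-identity pieces are null
  have hnull : ∀ σ : Equiv.Perm (Fin n), σ ≠ 1 → ν (A σ) = 0 := by
    intro σ hσ
    obtain ⟨i, hi⟩ : ∃ i, σ i ≠ i := by
      by_contra h
      push_neg at h
      exact hσ (Equiv.ext h)
    have hsub : A σ ⊆ {f : Fin n → X | f (σ i) = T (f i)} := by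
      intro f hf
      exact (hf i).symm
    exact measure_mono_null hsub (null_graph μ T (fun h => hi h.symm))
  -- put things together
  rw [hS]
  refine le_antisymm ?_ ?_
  · have : (⋃ σ, A σ) ⊆ A 1 ∪ ⋃ (σ : Equiv.Perm (Fin n)) (_ : σ ≠ 1), A σ := by
      intro f hf
      rcases mem_iUnion.1 hf with ⟨σ, hfσ⟩
      by_cases h : σ = 1
      · exact Or.inl (h ▸ hfσ)
      · exact Or.inr (mem_iUnion.2 ⟨σ, mem_iUnion.2 ⟨h, hfσ⟩⟩)
    calc ν (⋃ σ, A σ) ≤ ν (A 1 ∪ ⋃ (σ : Equiv.Perm (Fin n)) (_ : σ ≠ 1), A σ) :=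
          measure_mono this
      _ ≤ ν (A 1) + ν (⋃ (σ : Equiv.Perm (Fin n)) (_ : σ ≠ 1), A σ) := measure_union_le _ _
      _ = ν (A 1) := by
          rw [measure_iUnion_null fun σ => measure_iUnion_null fun h => hnull σ h, add_zero]
      _ = μ {x | T x = x} ^ n := hA1m
  · rw [← hA1m]
    exact measure_mono (subset_iUnion A 1)
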